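/- Let G × X → X be a continuous action of a second countable locally compact group G on a Hausdorff space X, and let x₀ ∈ X with orbit O = G·x₀. If O is locally compact in its relative topology, then for every compact neighborhood K of the identity in G there exists a neighborhood V of x₀ in X with V ∩ O ⊆ K·x₀. -/

import Mathlib

open scoped Pointwise


/-- If the orbit of `x₀` under a continuous action of a second countable locally
compact group on a Hausdorff space is locally compact in its relative topology,
then for every compact neighborhood `K` of the identity there is a neighborhood
`V` of `x₀` with `V ∩ (G·x₀) ⊆ K·x₀`. -/
theorem stmt4 {G X : Type*} [Group G] [TopologicalSpace G] [IsTopologicalGroup G]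
    [LocallyCompactSpace G] [SecondCountableTopology G]
    [TopologicalSpace X] [T2Space X] [MulAction G X] [ContinuousSMul G X]
    (x₀ : X) (hO : LocallyCompactSpace ↥(MulAction.orbit G x₀)) :
    ∀ K : Set G, K ∈ nhds (1 : G) → IsCompact K →
      ∃ V ∈ nhds x₀, V ∩ MulAction.orbit G x₀ ⊆ (fun g => g • x₀) '' K := by
  intro K hK _hKc
  -- the action of `G` on the orbit is continuous
  haveI : ContinuousSMul G (MulAction.orbit G x₀) :=
    ⟨Continuous.subtype_mk
      (continuous_fst.smul (continuous_subtype_val.comp continuous_snd)) _⟩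
  -- the base point as an element of the orbit
  set y₀ : MulAction.orbit G x₀ := ⟨x₀, MulAction.mem_orbit_self x₀⟩
  -- the orbit map is open around the identity by the open mapping theorem
  have key : K • ({y₀} : Set (MulAction.orbit G x₀)) ∈ nhds y₀ :=
    smul_singleton_mem_nhds_of_sigmaCompact hK y₀
  rw [mem_nhds_subtype] at key
  obtain ⟨V, hV, hVsub⟩ := key
  refine ⟨V, hV, ?_⟩
  rintro x ⟨hxV, hxO⟩
  have : (⟨x, hxO⟩ : MulAction.orbit G x₀) ∈ K • ({y₀} : Set (MulAction.orbit G x₀)) :=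
    hVsub hxV
  rw [Set.smul_singleton] at this
  obtain ⟨g, hg, hgx⟩ := this
  exact ⟨g, hg, congrArg Subtype.val hgx⟩
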